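/- arXiv:2211.14768 — 9 statements merged into one kernel-verified Lean document; each statement's English description precedes it below -/
import Mathlib

section
/- Let a₁, a₂ > 0 and τ ∈ ℝ. Let μ = (μ(1), μ(2)) be a two-armed instance with μ₂(1) ≤ τ, μ₂(2) ≤ τ and μ₁(1) < μ₁(2) (so arm 1 is optimal and arm 2 is feasible suboptimal). Then the infimum of D(μ′, μ) over all alternative instances μ′ with a unique optimal arm whose correct output (optimal arm, feasibility flag) differs from that of μ equals min{ a₂(τ − μ₂(1))², a₁(μ₁(2) − μ₁(1))²/4 }. -/
/-- The divergence between two-armed instances `μ'` and `μ`: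
`D(μ', μ) = max_{j∈{0,1}} [a₁(μ₁(j) − μ'₁(j))² + a₂(μ₂(j) − μ'₂(j))²]`. -/
noncomputable def InstDiv (a₁ a₂ : ℝ) (μ' μ : Fin 2 → ℝ × ℝ) : ℝ :=
  max (a₁ * ((μ 0).1 - (μ' 0).1) ^ 2 + a₂ * ((μ 0).2 - (μ' 0).2) ^ 2)
      (a₁ * ((μ 1).1 - (μ' 1).1) ^ 2 + a₂ * ((μ 1).2 - (μ' 1).2) ^ 2)

/-- The instance is feasible: some arm satisfies the constraint. -/
def InstFeasible (τ : ℝ) (μ : Fin 2 → ℝ × ℝ) : Prop := ∃ i, (μ i).2 ≤ τ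

/-- Arm `j` is the (unique) optimal arm of the two-armed instance `μ` with threshold `τ`:
in a feasible instance it is the feasible arm with strictly smaller objective value among
feasible arms; in an infeasible instance it is the arm with strictly smaller constraint value. -/
def IsOptArm (τ : ℝ) (μ : Fin 2 → ℝ × ℝ) (j : Fin 2) : Prop :=
  (InstFeasible τ μ ∧ (μ j).2 ≤ τ ∧ ∀ i, i ≠ j → (μ i).2 ≤ τ → (μ j).1 < (μ i).1)
  ∨ (¬ InstFeasible τ μ ∧ ∀ i, i ≠ j → (μ j).2 < (μ i).2)

/-- `μ'` is an alternative instance to `μ`: it has a (unique) optimal arm and its correct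
output — the pair (optimal arm, feasibility flag) — differs from that of `μ`. -/
def AltInstance (τ : ℝ) (μ' μ : Fin 2 → ℝ × ℝ) : Prop :=
  ∃ j' j : Fin 2, IsOptArm τ μ' j' ∧ IsOptArm τ μ j ∧
    (j' ≠ j ∨ ¬ (InstFeasible τ μ' ↔ InstFeasible τ μ))

set_option maxHeartbeats 2000000

/-- Lower-bound computation, Case 1: arm `0` is optimal and arm `1` is feasible suboptimal.
The infimum of the divergence over alternative instances equals
`min{a₂(τ − μ₂(1))², a₁(μ₁(2) − μ₁(1))²/4}`. -/
theorem two_arm_lb_feasible_suboptimal (a₁ a₂ τ : ℝ) (ha₁ : 0 < a₁) (ha₂ : 0 < a₂)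
    (μ : Fin 2 → ℝ × ℝ)
    (hf0 : (μ 0).2 ≤ τ) (hf1 : (μ 1).2 ≤ τ) (hopt : (μ 0).1 < (μ 1).1) :
    sInf { d : ℝ | ∃ μ' : Fin 2 → ℝ × ℝ, AltInstance τ μ' μ ∧ d = InstDiv a₁ a₂ μ' μ }
      = min (a₂ * (τ - (μ 0).2) ^ 2) (a₁ * ((μ 1).1 - (μ 0).1) ^ 2 / 4) := by
  set S := { d : ℝ | ∃ μ' : Fin 2 → ℝ × ℝ, AltInstance τ μ' μ ∧ d = InstDiv a₁ a₂ μ' μ } with hS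
  set m := min (a₂ * (τ - (μ 0).2) ^ 2) (a₁ * ((μ 1).1 - (μ 0).1) ^ 2 / 4) with hm
  have hfeas : InstFeasible τ μ := ⟨0, hf0⟩
  have hopt0 : IsOptArm τ μ 0 := by
    left
    refine ⟨hfeas, hf0, fun i hi _ => ?_⟩
    have : i = 1 := by omega
    subst this; exact hopt
  -- lower bound
  have hlow : ∀ d ∈ S, m ≤ d := by
    rintro d ⟨μ', ⟨j', j, hj', hj, hdiff⟩, rfl⟩
    have hj0 : j = 0 := by
      rcases hj with ⟨_, hjf, hjb⟩ | ⟨hnf, _⟩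
      · by_contra h
        have hj1 : j = 1 := by omega
        subst hj1
        exact absurd (hjb 0 (by omega) hf0) (not_lt.mpr hopt.le)
      · exact absurd hfeas hnf
    subst hj0
    rcases hj' with ⟨hf', hj'f, hj'b⟩ | ⟨hnf', hj'b⟩
    · have hj'1 : j' = 1 := by
        rcases hdiff with h | h
        · omega
        · exact absurd (iff_of_true hf' hfeas) h
      subst hj'1
      by_cases h0 : (μ' 0).2 ≤ τ
      · have hlt := hj'b 0 (by omega) h0
        refine le_trans (min_le_right _ _) ?_
        rw [InstDiv]
        by_contra hc
        push_neg at hc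
        obtain ⟨h1, h2⟩ := max_lt_iff.mp hc
        have hu : ((μ 0).1 - (μ' 0).1) ^ 2 < ((μ 1).1 - (μ 0).1) ^ 2 / 4 := by
          have := mul_nonneg ha₂.le (sq_nonneg ((μ 0).2 - (μ' 0).2))
          have h1' : a₁ * ((μ 0).1 - (μ' 0).1) ^ 2 < a₁ * (((μ 1).1 - (μ 0).1) ^ 2 / 4) := by
            nlinarith
          exact (mul_lt_mul_iff_right₀ ha₁).mp h1'
        have hv : ((μ 1).1 - (μ' 1).1) ^ 2 < ((μ 1).1 - (μ 0).1) ^ 2 / 4 := by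
          have := mul_nonneg ha₂.le (sq_nonneg ((μ 1).2 - (μ' 1).2))
          have h2' : a₁ * ((μ 1).1 - (μ' 1).1) ^ 2 < a₁ * (((μ 1).1 - (μ 0).1) ^ 2 / 4) := by
            nlinarith
          exact (mul_lt_mul_iff_right₀ ha₁).mp h2'
        nlinarith [sq_nonneg (((μ' 0).1 - (μ 0).1) - ((μ 1).1 - (μ' 1).1)),
          mul_pos (sub_pos.mpr hopt) (sub_pos.mpr hopt)]
      · push_neg at h0
        refine le_trans (min_le_left _ _) (le_trans ?_ (le_max_left _ _))
        nlinarith [mul_nonneg ha₁.le (sq_nonneg ((μ 0).1 - (μ' 0).1)),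
          mul_nonneg (mul_nonneg ha₂.le (sub_pos.mpr h0).le)
            (by linarith : (0:ℝ) ≤ (μ' 0).2 + τ - 2 * (μ 0).2)]
    · have h0 : τ < (μ' 0).2 := by
        by_contra h
        exact hnf' ⟨0, le_of_not_gt h⟩
      refine le_trans (min_le_left _ _) (le_trans ?_ (le_max_left _ _))
      nlinarith [mul_nonneg ha₁.le (sq_nonneg ((μ 0).1 - (μ' 0).1)),
        mul_nonneg (mul_nonneg ha₂.le (sub_pos.mpr h0).le)
          (by linarith : (0:ℝ) ≤ (μ' 0).2 + τ - 2 * (μ 0).2)]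
  -- constructions
  have hconA : ∀ δ : ℝ, 0 < δ →
      a₂ * (τ + δ - (μ 0).2) ^ 2 ∈ S := by
    intro δ hδ
    refine ⟨![((μ 0).1, τ + δ), μ 1], ⟨1, 0, ?_, hopt0, Or.inl (by omega)⟩, ?_⟩
    · left
      refine ⟨⟨1, by simp; exact hf1⟩, by simp; exact hf1, fun i hi h => ?_⟩
      have : i = 0 := by omega
      subst this
      simp at h
      linarith
    · rw [InstDiv]
      simp
      rw [max_eq_left (by positivity)]
      ring_nf
  have hconB : ∀ δ : ℝ, 0 < δ →
      a₁ * (((μ 1).1 - (μ 0).1) / 2 + δ) ^ 2 ∈ S := by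
    intro δ hδ
    obtain ⟨c, hc⟩ : ∃ c : ℝ, c = ((μ 0).1 + (μ 1).1) / 2 := ⟨_, rfl⟩
    refine ⟨![(c + δ, (μ 0).2), (c, (μ 1).2)], ⟨1, 0, ?_, hopt0, Or.inl (by omega)⟩, ?_⟩
    · left
      refine ⟨⟨1, by simp; exact hf1⟩, by simp; exact hf1, fun i hi h => ?_⟩
      have : i = 0 := by omega
      subst this
      simp
      linarith
    · rw [InstDiv]
      simp
      have hmax : a₁ * ((μ 1).1 - c) ^ 2 ≤ a₁ * ((μ 0).1 - (c + δ)) ^ 2 := by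
        have key : ((μ 1).1 - c) ^ 2 ≤ ((μ 0).1 - (c + δ)) ^ 2 := by
          rw [hc]; nlinarith [mul_pos hδ hδ, mul_pos hδ (sub_pos.mpr hopt)]
        exact mul_le_mul_of_nonneg_left key ha₁.le
      rw [max_eq_left hmax, hc]
      ring
  have hbdd : BddBelow S := ⟨m, hlow⟩
  refine le_antisymm ?_ (le_csInf ⟨_, hconA 1 one_pos⟩ hlow)
  apply le_of_forall_pos_le_add
  intro ε hε
  rcases le_total (a₂ * (τ - (μ 0).2) ^ 2) (a₁ * ((μ 1).1 - (μ 0).1) ^ 2 / 4) with hAB | hAB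
  · -- m = A
    have hden : 0 < a₂ * (2 * (τ - (μ 0).2) + 1) := by nlinarith
    set δ := min 1 (ε / (a₂ * (2 * (τ - (μ 0).2) + 1))) with hδdef
    have hδpos : 0 < δ := lt_min one_pos (div_pos hε hden)
    have h1 : δ ≤ 1 := min_le_left _ _
    have h2 : δ ≤ ε / (a₂ * (2 * (τ - (μ 0).2) + 1)) := min_le_right _ _
    have h2' : a₂ * (2 * (τ - (μ 0).2) + 1) * δ ≤ ε := by
      rw [le_div_iff₀ hden] at h2
      linarith
    calc sInf S ≤ a₂ * (τ + δ - (μ 0).2) ^ 2 := csInf_le hbdd (hconA δ hδpos)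
      _ ≤ m + ε := by
          rw [hm, min_eq_left hAB]
          nlinarith
  · have hΔ : 0 < (μ 1).1 - (μ 0).1 := by linarith
    have hden : 0 < a₁ * ((μ 1).1 - (μ 0).1 + 1) := by nlinarith
    set δ := min 1 (ε / (a₁ * ((μ 1).1 - (μ 0).1 + 1))) with hδdef
    have hδpos : 0 < δ := lt_min one_pos (div_pos hε hden)
    have h1 : δ ≤ 1 := min_le_left _ _
    have h2 : δ ≤ ε / (a₁ * ((μ 1).1 - (μ 0).1 + 1)) := min_le_right _ _
    have h2' : a₁ * ((μ 1).1 - (μ 0).1 + 1) * δ ≤ ε := by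
      rw [le_div_iff₀ hden] at h2
      linarith
    calc sInf S ≤ a₁ * (((μ 1).1 - (μ 0).1) / 2 + δ) ^ 2 := csInf_le hbdd (hconB δ hδpos)
      _ ≤ m + ε := by
          rw [hm, min_eq_right hAB]
          nlinarith
end

section
/- Let a₁, a₂ > 0 and τ ∈ ℝ. Let μ = (μ(1), μ(2)) be a two-armed instance with μ₂(1) ≤ τ < μ₂(2) and μ₁(2) ≤ μ₁(1) (so arm 1 is optimal and arm 2 is a deceiver). Then the infimum of D(μ′, μ) over all alternative instances μ′ with a unique optimal arm whose correct output (optimal arm, feasibility flag) differs from that of μ equals min{ a₂(τ − μ₂(1))², a₂(μ₂(2) − τ)² }. -/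
lemma fin2_ne_zero {i : Fin 2} (h : i ≠ 0) : i = 1 := by omega
lemma fin2_ne_one {i : Fin 2} (h : i ≠ 1) : i = 0 := by omega

/-- Lower-bound computation, Case 2: arm `0` is optimal and arm `1` is a deceiver.
The infimum of the divergence over alternative instances equals
`min{a₂(τ − μ₂(1))², a₂(μ₂(2) − τ)²}`. -/

theorem two_arm_lb_deceiver (a₁ a₂ τ : ℝ) (ha₁ : 0 < a₁) (ha₂ : 0 < a₂)
    (μ : Fin 2 → ℝ × ℝ)
    (hf0 : (μ 0).2 ≤ τ) (hf1 : τ < (μ 1).2) (hdec : (μ 1).1 ≤ (μ 0).1) :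
    sInf { d : ℝ | ∃ μ' : Fin 2 → ℝ × ℝ, AltInstance τ μ' μ ∧ d = InstDiv a₁ a₂ μ' μ }
      = min (a₂ * (τ - (μ 0).2) ^ 2) (a₂ * ((μ 1).2 - τ) ^ 2) := by
  set A := a₂ * (τ - (μ 0).2) ^ 2 with hA
  set B := a₂ * ((μ 1).2 - τ) ^ 2 with hB
  set S := { d : ℝ | ∃ μ' : Fin 2 → ℝ × ℝ, AltInstance τ μ' μ ∧ d = InstDiv a₁ a₂ μ' μ }
    with hS
  have hfeasμ : InstFeasible τ μ := ⟨0, hf0⟩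
  have hopt0 : IsOptArm τ μ 0 := by
    left
    refine ⟨hfeasμ, hf0, ?_⟩
    intro i hi hle
    have h1 : i = 1 := fin2_ne_zero hi
    subst h1
    exact absurd hle (not_le.2 hf1)
  -- lower bound
  have hlb : ∀ d ∈ S, min A B ≤ d := by
    rintro d ⟨μ', ⟨j', j, hj', hj, hdiff⟩, rfl⟩
    have hj0 : j = 0 := by
      by_contra h
      have h1 : j = 1 := fin2_ne_zero h
      subst h1
      rcases hj with ⟨_, h1, _⟩ | ⟨hnf, _⟩
      · exact absurd h1 (not_le.2 hf1)
      · exact hnf hfeasμ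
    subst hj0
    rcases hj' with ⟨hfeas', hle', _⟩ | ⟨hnf', _⟩
    · have hj'1 : j' = 1 := by
        by_contra h
        have h0 : j' = 0 := fin2_ne_one h
        subst h0
        rcases hdiff with h | h
        · exact h rfl
        · exact h (iff_of_true hfeas' hfeasμ)
      subst hj'1
      have key : B ≤ a₁ * ((μ 1).1 - (μ' 1).1) ^ 2 + a₂ * ((μ 1).2 - (μ' 1).2) ^ 2 := by
        have h2 : ((μ 1).2 - τ) ^ 2 ≤ ((μ 1).2 - (μ' 1).2) ^ 2 := by nlinarith
        nlinarith [sq_nonneg ((μ 1).1 - (μ' 1).1),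
          mul_le_mul_of_nonneg_left h2 ha₂.le]
      calc min A B ≤ B := min_le_right _ _
        _ ≤ _ := key
        _ ≤ _ := le_max_right _ _
    · have h0 : τ < (μ' 0).2 := by
        by_contra h
        exact hnf' ⟨0, not_lt.1 h⟩
      have key : A ≤ a₁ * ((μ 0).1 - (μ' 0).1) ^ 2 + a₂ * ((μ 0).2 - (μ' 0).2) ^ 2 := by
        have h2 : (τ - (μ 0).2) ^ 2 ≤ ((μ 0).2 - (μ' 0).2) ^ 2 := by nlinarith
        nlinarith [sq_nonneg ((μ 0).1 - (μ' 0).1),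
          mul_le_mul_of_nonneg_left h2 ha₂.le]
      calc min A B ≤ A := min_le_left _ _
        _ ≤ _ := key
        _ ≤ _ := le_max_left _ _
  -- construction 2: make arm 1 feasible and optimal; cost ≤ B + ε
  have mem2 : ∀ ε : ℝ, 0 < ε → ∃ d ∈ S, d ≤ B + ε := by
    intro ε hε
    set δ := min 1 (ε / a₁) with hδdef
    have hδpos : 0 < δ := lt_min one_pos (div_pos hε ha₁)
    have hδ1 : δ ≤ 1 := min_le_left _ _
    have hδε : a₁ * δ ^ 2 ≤ ε := by
      have h1 : δ ≤ ε / a₁ := min_le_right _ _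
      have h2 : δ * a₁ ≤ ε := (le_div_iff₀ ha₁).1 h1
      nlinarith
    set μ' : Fin 2 → ℝ × ℝ := ![μ 0, ((μ 1).1 - δ, τ)] with hμ'
    have e0 : μ' 0 = μ 0 := rfl
    have e1 : μ' 1 = ((μ 1).1 - δ, τ) := rfl
    have hfeas' : InstFeasible τ μ' := ⟨1, by rw [e1]⟩
    have hopt' : IsOptArm τ μ' 1 := by
      left
      refine ⟨hfeas', by rw [e1], ?_⟩
      intro i hi _
      have h0 : i = 0 := fin2_ne_one hi
      subst h0
      rw [e0, e1]
      simp only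
      linarith
    refine ⟨InstDiv a₁ a₂ μ' μ, ⟨μ', ⟨1, 0, hopt', hopt0, Or.inl (by decide)⟩, rfl⟩, ?_⟩
    have hBnn : (0:ℝ) ≤ B := by positivity
    apply max_le
    · rw [e0]; nlinarith
    · rw [e1]; simp only; nlinarith
  -- construction 1: make instance infeasible with arm 0 still optimal; cost ≤ A + ε
  have mem1 : ∀ ε : ℝ, 0 < ε → ∃ d ∈ S, d ≤ A + ε := by
    intro ε hε
    set c := τ - (μ 0).2 with hc
    have hcnn : 0 ≤ c := by simp [hc]; linarith
    have hdpos : 0 < a₂ * (2 * c + 1) := by positivity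
    set δ := min 1 (min (((μ 1).2 - τ) / 2) (ε / (a₂ * (2 * c + 1)))) with hδdef
    have hδpos : 0 < δ :=
      lt_min one_pos (lt_min (by linarith) (div_pos hε hdpos))
    have hδ1 : δ ≤ 1 := min_le_left _ _
    have hδhalf : δ ≤ ((μ 1).2 - τ) / 2 := le_trans (min_le_right _ _) (min_le_left _ _)
    have hδε' : δ ≤ ε / (a₂ * (2 * c + 1)) := le_trans (min_le_right _ _) (min_le_right _ _)
    have hδε : δ * (a₂ * (2 * c + 1)) ≤ ε := (le_div_iff₀ hdpos).1 hδε'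
    set μ' : Fin 2 → ℝ × ℝ := ![((μ 0).1, τ + δ), μ 1] with hμ'
    have e0 : μ' 0 = ((μ 0).1, τ + δ) := rfl
    have e1 : μ' 1 = μ 1 := rfl
    have hinf : ¬ InstFeasible τ μ' := by
      rintro ⟨i, hi⟩
      rcases eq_or_ne i 0 with h | h
      · subst h; rw [e0] at hi; simp only at hi; linarith
      · have h1 : i = 1 := fin2_ne_zero h
        subst h1; rw [e1] at hi; linarith
    have hopt' : IsOptArm τ μ' 0 := by
      right
      refine ⟨hinf, ?_⟩
      intro i hi
      have h1 : i = 1 := fin2_ne_zero hi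
      subst h1
      rw [e0, e1]
      simp only
      linarith
    refine ⟨InstDiv a₁ a₂ μ' μ,
      ⟨μ', ⟨0, 0, hopt', hopt0, Or.inr (by
        intro hiff
        exact hinf (hiff.2 hfeasμ))⟩, rfl⟩, ?_⟩
    have hAnn : (0:ℝ) ≤ A := by positivity
    apply max_le
    · rw [e0]
      simp only
      have : (μ 0).2 - (τ + δ) = -(c + δ) := by rw [hc]; ring
      rw [this]
      nlinarith
    · rw [e1]; nlinarith
  have hne : S.Nonempty := by
    obtain ⟨d, hd, _⟩ := mem2 1 one_pos
    exact ⟨d, hd⟩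
  have hbdd : BddBelow S := ⟨min A B, fun d hd => hlb d hd⟩
  apply le_antisymm
  · apply le_of_forall_pos_le_add
    intro ε hε
    rcases le_total A B with h | h
    · obtain ⟨d, hd, hdle⟩ := mem1 ε hε
      calc sInf S ≤ d := csInf_le hbdd hd
        _ ≤ A + ε := hdle
        _ = min A B + ε := by rw [min_eq_left h]
    · obtain ⟨d, hd, hdle⟩ := mem2 ε hε
      calc sInf S ≤ d := csInf_le hbdd hd
        _ ≤ B + ε := hdle
        _ = min A B + ε := by rw [min_eq_right h]
  · exact le_csInf hne hlb
end

section
/- Let a₁, a₂ > 0 and τ ∈ ℝ. Let μ = (μ(1), μ(2)) be a two-armed instance with μ₂(1) ≤ τ < μ₂(2) and μ₁(1) < μ₁(2) (so arm 1 is optimal and arm 2 is infeasible suboptimal). Then the infimum of D(μ′, μ) over all alternative instances μ′ with a unique optimal arm whose correct output (optimal arm, feasibility flag) differs from that of μ is at most min{ a₂(τ − μ₂(1))², max{ a₂(μ₂(2) − τ)², a₁(μ₁(2) − μ₁(1))² } }. -/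
/-- Lower-bound computation, Case 3: arm `0` is optimal and arm `1` is infeasible suboptimal.
The infimum of the divergence over alternative instances is at most
`min{a₂(τ − μ₂(1))², max{a₂(μ₂(2) − τ)², a₁(μ₁(2) − μ₁(1))²}}`. -/
theorem two_arm_lb_infeasible_suboptimal (a₁ a₂ τ : ℝ) (ha₁ : 0 < a₁) (ha₂ : 0 < a₂)
    (μ : Fin 2 → ℝ × ℝ)
    (hf0 : (μ 0).2 ≤ τ) (hf1 : τ < (μ 1).2) (hopt : (μ 0).1 < (μ 1).1) :
    sInf { d : ℝ | ∃ μ' : Fin 2 → ℝ × ℝ, AltInstance τ μ' μ ∧ d = InstDiv a₁ a₂ μ' μ }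
      ≤ min (a₂ * (τ - (μ 0).2) ^ 2)
          (max (a₂ * ((μ 1).2 - τ) ^ 2) (a₁ * ((μ 1).1 - (μ 0).1) ^ 2)) := by
  set S := { d : ℝ | ∃ μ' : Fin 2 → ℝ × ℝ, AltInstance τ μ' μ ∧ d = InstDiv a₁ a₂ μ' μ }
    with hS
  have hbdd : BddBelow S := by
    refine ⟨0, ?_⟩
    rintro d ⟨μ', -, rfl⟩
    have h0 : (0:ℝ) ≤ a₁ * ((μ 0).1 - (μ' 0).1) ^ 2 + a₂ * ((μ 0).2 - (μ' 0).2) ^ 2 := by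
      positivity
    exact h0.trans (le_max_left _ _)
  -- optimality of arm 0 in the original instance
  have hopt0 : IsOptArm τ μ 0 := by
    refine Or.inl ⟨⟨0, hf0⟩, hf0, fun i hi hfi => ?_⟩
    fin_cases i
    · exact absurd rfl hi
    · exact hopt
  refine le_min ?_ ?_
  · -- bound by a₂ (τ - μ₂(0))²
    refine le_of_forall_pos_le_add fun δ hδ => ?_
    set t := τ - (μ 0).2 with ht
    have ht0 : 0 ≤ t := by simp [ht]; linarith
    set ε : ℝ := min (((μ 1).2 - τ)/2) (min 1 (δ/(a₂*(2*t+1)))) with hε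
    have hεpos : 0 < ε := by
      refine lt_min (by linarith) (lt_min one_pos ?_)
      positivity
    have hε1 : ε ≤ 1 := (min_le_right _ _).trans (min_le_left _ _)
    have hε2 : ε ≤ δ/(a₂*(2*t+1)) := (min_le_right _ _).trans (min_le_right _ _)
    have hε3 : τ + ε < (μ 1).2 := by
      have := (min_le_left (((μ 1).2 - τ)/2) (min 1 (δ/(a₂*(2*t+1)))))
      rw [← hε] at this
      linarith
    set μ' : Fin 2 → ℝ × ℝ := ![((μ 0).1, τ + ε), μ 1] with hμ'
    have h0 : μ' 0 = ((μ 0).1, τ + ε) := rfl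
    have h1 : μ' 1 = μ 1 := rfl
    have hnf : ¬ InstFeasible τ μ' := by
      rintro ⟨i, hi⟩
      fin_cases i <;> simp [hμ'] at hi <;> linarith
    have hopt' : IsOptArm τ μ' 0 := by
      refine Or.inr ⟨hnf, fun i hi => ?_⟩
      fin_cases i
      · exact absurd rfl hi
      · show ((μ 0).1, τ + ε).2 < (μ 1).2
        simpa using hε3
    have hmem : InstDiv a₁ a₂ μ' μ ∈ S :=
      ⟨μ', ⟨0, 0, hopt', hopt0, Or.inr (by simp [hnf]; exact ⟨0, hf0⟩)⟩, rfl⟩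
    refine (csInf_le hbdd hmem).trans ?_
    rw [InstDiv, h0, h1]
    have hval : a₁ * ((μ 1).1 - (μ 1).1) ^ 2 + a₂ * ((μ 1).2 - (μ 1).2) ^ 2 = 0 := by ring
    have hmul : ε * (a₂ * (2*t+1)) ≤ δ := (le_div_iff₀ (by positivity)).mp hε2
    have hle : a₁ * ((μ 0).1 - (μ 0).1) ^ 2 + a₂ * ((μ 0).2 - (τ + ε)) ^ 2
        ≤ a₂ * t ^ 2 + δ := by
      have : (μ 0).2 - (τ + ε) = -(t + ε) := by rw [ht]; ring
      rw [this]
      nlinarith [sq_nonneg ε]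
    rw [hval]
    have hnn : (0:ℝ) ≤ a₁ * ((μ 0).1 - (μ 0).1) ^ 2 + a₂ * ((μ 0).2 - (τ + ε)) ^ 2 := by
      positivity
    calc max (a₁ * ((μ 0).1 - (μ 0).1) ^ 2 + a₂ * ((μ 0).2 - (τ + ε)) ^ 2) 0
        = a₁ * ((μ 0).1 - (μ 0).1) ^ 2 + a₂ * ((μ 0).2 - (τ + ε)) ^ 2 := max_eq_left hnn
      _ ≤ a₂ * t ^ 2 + δ := hle
  · -- bound by max(a₂(μ₂(1)-τ)², a₁(μ₁(1)-μ₁(0))²)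
    refine le_of_forall_pos_le_add fun δ hδ => ?_
    set g := (μ 1).1 - (μ 0).1 with hg
    have hg0 : 0 < g := by simp [hg]; linarith
    set ε : ℝ := min 1 (δ/(a₁*(2*g+1))) with hε
    have hεpos : 0 < ε := lt_min one_pos (by positivity)
    have hε1 : ε ≤ 1 := min_le_left _ _
    have hε2 : ε ≤ δ/(a₁*(2*g+1)) := min_le_right _ _
    set μ' : Fin 2 → ℝ × ℝ := ![((μ 1).1 + ε, (μ 0).2), ((μ 1).1, τ)] with hμ'
    have h0 : μ' 0 = ((μ 1).1 + ε, (μ 0).2) := rfl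
    have h1 : μ' 1 = ((μ 1).1, τ) := rfl
    have hopt' : IsOptArm τ μ' 1 := by
      refine Or.inl ⟨⟨1, by rw [h1]⟩, by rw [h1], fun i hi hfi => ?_⟩
      fin_cases i
      · show ((μ 1).1, τ).1 < ((μ 1).1 + ε, (μ 0).2).1
        simpa using hεpos
      · exact absurd rfl hi
    have hmem : InstDiv a₁ a₂ μ' μ ∈ S :=
      ⟨μ', ⟨1, 0, hopt', hopt0, Or.inl (by decide)⟩, rfl⟩
    refine (csInf_le hbdd hmem).trans ?_
    rw [InstDiv, h0, h1]
    have hle0 : a₁ * ((μ 0).1 - ((μ 1).1 + ε)) ^ 2 + a₂ * ((μ 0).2 - (μ 0).2) ^ 2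
        ≤ a₁ * g ^ 2 + δ := by
      have : (μ 0).1 - ((μ 1).1 + ε) = -(g + ε) := by rw [hg]; ring
      rw [this]
      have hmul : ε * (a₁ * (2*g+1)) ≤ δ := (le_div_iff₀ (by positivity)).mp hε2
      nlinarith [sq_nonneg ε]
    have hle1 : a₁ * ((μ 1).1 - (μ 1).1) ^ 2 + a₂ * ((μ 1).2 - τ) ^ 2
        = a₂ * ((μ 1).2 - τ) ^ 2 := by ring
    rw [hle1]
    refine max_le ?_ ?_
    · exact hle0.trans (by
        have := le_max_right (a₂ * ((μ 1).2 - τ) ^ 2) (a₁ * g ^ 2)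
        linarith)
    · have := le_max_left (a₂ * ((μ 1).2 - τ) ^ 2) (a₁ * g ^ 2)
      linarith
end

section
/- Let a₁, a₂ > 0 and τ ∈ ℝ. Let μ = (μ(1), μ(2)) be a two-armed instance with τ < μ₂(1) < μ₂(2) (so the instance is infeasible and arm 1 is optimal). Then the infimum of D(μ′, μ) over all alternative instances μ′ with a unique optimal arm whose correct output (optimal arm, feasibility flag) differs from that of μ equals min{ a₂(μ₂(2) − μ₂(1))²/4, a₂(μ₂(1) − τ)² }. -/
/-- Lower-bound computation, Case 4: the instance is infeasible and arm `0` is optimal.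
The infimum of the divergence over alternative instances equals
`min{a₂(μ₂(2) − μ₂(1))²/4, a₂(μ₂(1) − τ)²}`. -/
theorem two_arm_lb_infeasible_instance (a₁ a₂ τ : ℝ) (ha₁ : 0 < a₁) (ha₂ : 0 < a₂)
    (μ : Fin 2 → ℝ × ℝ)
    (hf0 : τ < (μ 0).2) (hf1 : (μ 0).2 < (μ 1).2) :
    sInf { d : ℝ | ∃ μ' : Fin 2 → ℝ × ℝ, AltInstance τ μ' μ ∧ d = InstDiv a₁ a₂ μ' μ }
      = min (a₂ * ((μ 1).2 - (μ 0).2) ^ 2 / 4) (a₂ * ((μ 0).2 - τ) ^ 2) := by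
  set p0 : ℝ := (μ 0).2 with hp0
  set p1 : ℝ := (μ 1).2 with hp1
  set S := { d : ℝ | ∃ μ' : Fin 2 → ℝ × ℝ, AltInstance τ μ' μ ∧ d = InstDiv a₁ a₂ μ' μ }
    with hS
  have hcase : ∀ i : Fin 2, i = 0 ∨ i = 1 := by omega
  have hμinf : ¬ InstFeasible τ μ := by
    rintro ⟨i, hi⟩
    rcases hcase i with rfl | rfl
    · exact absurd hi (by simp only [← hp0]; linarith)
    · exact absurd hi (by simp only [← hp1]; linarith)
  have hopt0 : IsOptArm τ μ 0 := by
    refine Or.inr ⟨hμinf, fun i hi => ?_⟩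
    rcases hcase i with rfl | rfl
    · exact absurd rfl hi
    · exact hf1
  -- the B-witness: move arm 0's constraint value down to τ
  have hBmem : a₂ * (p0 - τ) ^ 2 ∈ S := by
    refine ⟨![((μ 0).1, τ), μ 1], ⟨0, 0, ?_, hopt0, ?_⟩, ?_⟩
    · refine Or.inl ⟨⟨0, by simp⟩, by simp, fun i hi h2 => ?_⟩
      rcases hcase i with rfl | rfl
      · exact absurd rfl hi
      · simp only [Matrix.cons_val_one, Matrix.head_cons, Matrix.cons_val_zero] at h2
        linarith
    · right
      intro hiff
      exact hμinf (hiff.mp ⟨0, by simp⟩)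
    · simp only [InstDiv, Matrix.cons_val_zero, Matrix.cons_val_one, Matrix.head_cons,
        sub_self, ne_eq]
      norm_num
      rw [max_eq_left (by positivity), hp0]
  have hSne : S.Nonempty := ⟨_, hBmem⟩
  have hbdd : BddBelow S := by
    refine ⟨0, fun d hd => ?_⟩
    obtain ⟨μ', _, rfl⟩ := hd
    simp only [InstDiv, le_max_iff]
    left; positivity
  have hAB0 : (0:ℝ) < p1 - p0 := by linarith
  refine le_antisymm (le_min ?_ ?_) ?_
  · -- sInf S ≤ A, via near-witnesses
    rw [csInf_le_iff hbdd hSne]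
    intro b hb
    refine le_of_forall_pos_le_add fun ε hε => ?_
    set δ : ℝ := min (min ((p0 - τ)/2) 1) (ε / (2 * a₂ * ((p1-p0) + 1))) with hδ
    have hδpos : 0 < δ := by
      apply lt_min (lt_min (by linarith) one_pos)
      positivity
    have hδ1 : δ ≤ 1 := le_trans (min_le_left _ _) (min_le_right _ _)
    have hδτ : δ ≤ (p0 - τ)/2 := le_trans (min_le_left _ _) (min_le_left _ _)
    have hδε : δ ≤ ε / (2 * a₂ * ((p1-p0) + 1)) := min_le_right _ _
    set m : ℝ := (p0 + p1)/2 with hm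
    have hmτ : τ < m := by rw [hm]; linarith
    -- witness instance
    set ν : Fin 2 → ℝ × ℝ := ![((μ 0).1, m), ((μ 1).1, m - δ)] with hν
    have hν0 : ν 0 = ((μ 0).1, m) := rfl
    have hν1 : ν 1 = ((μ 1).1, m - δ) := rfl
    have hνinf : ¬ InstFeasible τ ν := by
      rintro ⟨i, hi⟩
      rcases hcase i with rfl | rfl
      · rw [hν0] at hi; simp only at hi; linarith
      · rw [hν1] at hi; simp only at hi; linarith
    have hνmem : InstDiv a₁ a₂ ν μ ∈ S := by
      refine ⟨ν, ⟨1, 0, ?_, hopt0, Or.inl (by decide)⟩, rfl⟩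
      refine Or.inr ⟨hνinf, fun i hi => ?_⟩
      rcases hcase i with rfl | rfl
      · rw [hν0, hν1]; simp only; linarith
      · exact absurd rfl hi
    have hval : InstDiv a₁ a₂ ν μ = a₂ * ((p1 - p0)/2 + δ) ^ 2 := by
      simp only [InstDiv, hν0, hν1, ← hp0, ← hp1, sub_self, mul_zero]
      rw [max_eq_right]
      · rw [hm]; ring_nf
      · rw [hm]
        nlinarith [mul_nonneg (mul_nonneg ha₂.le hδpos.le)
          (show (0:ℝ) ≤ p1 - p0 + δ by linarith)]
    have hb' := hb hνmem
    rw [hval] at hb'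
    have hfin : a₂ * ((p1 - p0)/2 + δ) ^ 2 ≤ a₂ * (p1 - p0) ^ 2 / 4 + ε := by
      have h3 : δ * (2 * a₂ * ((p1-p0) + 1)) ≤ ε := by
        rw [← le_div_iff₀ (by positivity)]
        exact hδε
      nlinarith
    linarith
  · exact csInf_le hbdd hBmem
  · -- lower bound
    refine le_csInf hSne ?_
    rintro d ⟨μ', ⟨j', j, hj', hj, hdiff⟩, rfl⟩
    have hj0 : j = 0 := by
      rcases hj with ⟨hfe, _⟩ | ⟨_, hlt⟩
      · exact absurd hfe hμinf
      · by_contra h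
        have hj1 : j = 1 := by omega
        subst hj1
        have h0 := hlt 0 (by decide)
        rw [← hp0, ← hp1] at h0
        linarith
    subst hj0
    by_cases hfe : InstFeasible τ μ'
    · -- feasible alternative: cost ≥ B
      obtain ⟨i, hi⟩ := hfe
      refine le_trans (min_le_right _ _) ?_
      rcases hcase i with rfl | rfl
      · refine le_trans ?_ (le_max_left _ _)
        have h1 : (p0 - τ)^2 ≤ ((μ 0).2 - (μ' 0).2)^2 := by
          rw [← hp0]; nlinarith
        nlinarith [sq_nonneg ((μ 0).1 - (μ' 0).1)]
      · refine le_trans ?_ (le_max_right _ _)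
        have h1 : (p0 - τ)^2 ≤ ((μ 1).2 - (μ' 1).2)^2 := by
          rw [← hp1]; nlinarith
        nlinarith [sq_nonneg ((μ 1).1 - (μ' 1).1)]
    · -- infeasible alternative: j' = 1, cost ≥ A
      have hj'1 : j' = 1 := by
        rcases hdiff with h | h
        · omega
        · exact absurd (iff_of_false hfe hμinf) h
      subst hj'1
      have hq : (μ' 1).2 < (μ' 0).2 := by
        rcases hj' with ⟨hfe', _⟩ | ⟨_, hlt⟩
        · exact absurd hfe' hfe
        · exact hlt 0 (by decide)
      refine le_trans (min_le_left _ _) ?_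
      by_cases hc : (p0 + p1)/2 ≤ (μ' 0).2
      · refine le_trans ?_ (le_max_left _ _)
        have h1 : (p1 - p0)^2/4 ≤ ((μ 0).2 - (μ' 0).2)^2 := by
          rw [← hp0]; nlinarith
        nlinarith [sq_nonneg ((μ 0).1 - (μ' 0).1)]
      · refine le_trans ?_ (le_max_right _ _)
        push_neg at hc
        have h1 : (p1 - p0)^2/4 ≤ ((μ 1).2 - (μ' 1).2)^2 := by
          rw [← hp1]; nlinarith
        nlinarith [sq_nonneg ((μ 1).1 - (μ' 1).1)]
end

section
/- Let y, M ≥ 0 with max{y, M} > 0, and set z = max{y, M}. Then the infimum over x ∈ ℝ of max{ x², y² + (M − x)² } equals ( (y² + z²) / (2z) )². In particular, if y > M the infimum equals y², and if y ≤ M the infimum equals ( (y² + M²) / (2M) )², attained at x = (y² + M²)/(2M). -/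
/-- One-dimensional optimization identity from the lower-bound computation for a feasible
two-armed instance whose second arm is infeasible suboptimal: for `y, M ≥ 0` with
`z = max{y, M} > 0`, the infimum over `x ∈ ℝ` of `max{x², y² + (M − x)²}` equals
`((y² + z²)/(2z))²`; if `y > M` it equals `y²`, and if `y ≤ M` it equals
`((y² + M²)/(2M))²`, attained at `x = (y² + M²)/(2M)`. -/
theorem inf_max_sq (y M : ℝ) (hy : 0 ≤ y) (hM : 0 ≤ M) (hpos : 0 < max y M) :
    (sInf { d : ℝ | ∃ x : ℝ, d = max (x ^ 2) (y ^ 2 + (M - x) ^ 2) }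
      = ((y ^ 2 + (max y M) ^ 2) / (2 * max y M)) ^ 2) ∧
    (M < y → sInf { d : ℝ | ∃ x : ℝ, d = max (x ^ 2) (y ^ 2 + (M - x) ^ 2) } = y ^ 2) ∧
    (y ≤ M →
      sInf { d : ℝ | ∃ x : ℝ, d = max (x ^ 2) (y ^ 2 + (M - x) ^ 2) }
        = ((y ^ 2 + M ^ 2) / (2 * M)) ^ 2 ∧
      max (((y ^ 2 + M ^ 2) / (2 * M)) ^ 2)
          (y ^ 2 + (M - (y ^ 2 + M ^ 2) / (2 * M)) ^ 2)
        = ((y ^ 2 + M ^ 2) / (2 * M)) ^ 2) := by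
  set S := { d : ℝ | ∃ x : ℝ, d = max (x ^ 2) (y ^ 2 + (M - x) ^ 2) } with hS
  have key : ∀ v : ℝ, (∃ x : ℝ, v = max (x ^ 2) (y ^ 2 + (M - x) ^ 2)) →
      (∀ x : ℝ, v ≤ max (x ^ 2) (y ^ 2 + (M - x) ^ 2)) → sInf S = v := by
    intro v hv hlb
    exact IsLeast.csInf_eq ⟨hv, fun d hd => by obtain ⟨x, rfl⟩ := hd; exact hlb x⟩
  rcases le_or_gt y M with hle | hlt
  · -- case y ≤ M
    have hMpos : 0 < M := lt_of_lt_of_le hpos (max_le hle le_rfl)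
    set x₀ : ℝ := (y ^ 2 + M ^ 2) / (2 * M) with hx0
    have hx0pos : 0 < x₀ := by positivity
    have heq : y ^ 2 + (M - x₀) ^ 2 = x₀ ^ 2 := by
      rw [hx0]; field_simp; ring
    have hmax : max (x₀ ^ 2) (y ^ 2 + (M - x₀) ^ 2) = x₀ ^ 2 := by
      rw [heq, max_self]
    have hlb : ∀ x : ℝ, x₀ ^ 2 ≤ max (x ^ 2) (y ^ 2 + (M - x) ^ 2) := by
      intro x
      rcases le_total x₀ x with h | h
      · exact le_max_of_le_left (by nlinarith)
      · have hMx0 : 0 ≤ M - x₀ := by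
          rw [hx0, sub_nonneg, div_le_iff₀ (by positivity : (0:ℝ) < 2 * M)]
          nlinarith
        exact le_max_of_le_right (by nlinarith)
    have hInf : sInf S = x₀ ^ 2 := key _ ⟨x₀, hmax.symm⟩ hlb
    have hz : max y M = M := max_eq_right hle
    refine ⟨by rw [hInf, hz], fun h => absurd h (not_lt.mpr hle), fun _ => ⟨hInf, hmax⟩⟩
  · -- case M < y
    have hypos : 0 < y := lt_of_le_of_lt hM hlt
    have hz : max y M = y := max_eq_left hlt.le
    have hval : ((y ^ 2 + y ^ 2) / (2 * y)) ^ 2 = y ^ 2 := by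
      field_simp; ring
    have hmax : max (M ^ 2) (y ^ 2 + (M - M) ^ 2) = y ^ 2 := by
      rw [sub_self]
      simp only [ne_eq, OfNat.ofNat_ne_zero, not_false_eq_true, zero_pow, add_zero]
      exact max_eq_right (by nlinarith)
    have hlb : ∀ x : ℝ, y ^ 2 ≤ max (x ^ 2) (y ^ 2 + (M - x) ^ 2) :=
      fun x => le_max_of_le_right (by nlinarith [sq_nonneg (M - x)])
    have hInf : sInf S = y ^ 2 := key _ ⟨M, hmax.symm⟩ hlb
    exact ⟨by rw [hInf, hz, hval], fun _ => hInf, fun h => absurd h (not_le.mpr hlt)⟩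
end

section
/- Let X̂₁ and X̂₂ be real random variables on a probability space which are (a, n)-concentrated around m₁ and m₂ respectively, where a > 0, n ≥ 1 and m₁ < m₂. Then P(X̂₁ ≥ X̂₂) ≤ 4·exp( −(n/4)·a·(m₂ − m₁)² ). -/
open MeasureTheory Real

/-- A real random variable `X` on `(Ω, P)` is `(a, n)`-concentrated around `m` if
`P(|X − m| ≥ Δ) ≤ 2·exp(−a·n·Δ²)` for every `Δ > 0`. -/
def ConcentratedAround {Ω : Type*} [MeasurableSpace Ω] (P : Measure Ω)
    (a : ℝ) (n : ℕ) (X : Ω → ℝ) (m : ℝ) : Prop :=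
  ∀ Δ : ℝ, 0 < Δ →
    P {ω | Δ ≤ |X ω - m|} ≤ ENNReal.ofReal (2 * Real.exp (-(a * n * Δ ^ 2)))

/-- If `X₁`, `X₂` are `(a, n)`-concentrated around `m₁ < m₂`, then
`P(X̂₁ ≥ X̂₂) ≤ 4·exp(−(n/4)·a·(m₂ − m₁)²)`. -/
theorem prob_crossing_le {Ω : Type*} [MeasurableSpace Ω] (P : Measure Ω)
    [IsProbabilityMeasure P] (a : ℝ) (n : ℕ) (ha : 0 < a) (hn : 1 ≤ n)
    (m₁ m₂ : ℝ) (hm : m₁ < m₂) (X₁ X₂ : Ω → ℝ)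
    (hX₁ : ConcentratedAround P a n X₁ m₁) (hX₂ : ConcentratedAround P a n X₂ m₂) :
    P {ω | X₂ ω ≤ X₁ ω}
      ≤ ENNReal.ofReal (4 * Real.exp (-((n : ℝ) / 4 * (a * (m₂ - m₁) ^ 2)))) := by
  set Δ := (m₂ - m₁) / 2 with hΔ
  have hΔpos : 0 < Δ := by simp [hΔ]; linarith
  have hsub : {ω | X₂ ω ≤ X₁ ω} ⊆
      {ω | Δ ≤ |X₁ ω - m₁|} ∪ {ω | Δ ≤ |X₂ ω - m₂|} := by
    intro ω hω
    by_contra h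
    simp only [Set.mem_union, Set.mem_setOf_eq, not_or, not_le] at h
    obtain ⟨h1, h2⟩ := h
    rw [abs_lt] at h1 h2
    simp only [Set.mem_setOf_eq] at hω
    have : X₁ ω < m₁ + Δ := by linarith [h1.2]
    have : m₂ - Δ < X₂ ω := by linarith [h2.1]
    have : m₁ + Δ = m₂ - Δ := by rw [hΔ]; ring
    linarith
  calc P {ω | X₂ ω ≤ X₁ ω} ≤ P ({ω | Δ ≤ |X₁ ω - m₁|} ∪ {ω | Δ ≤ |X₂ ω - m₂|}) :=
        measure_mono hsub
    _ ≤ P {ω | Δ ≤ |X₁ ω - m₁|} + P {ω | Δ ≤ |X₂ ω - m₂|} := measure_union_le _ _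
    _ ≤ ENNReal.ofReal (2 * Real.exp (-(a * n * Δ ^ 2)))
        + ENNReal.ofReal (2 * Real.exp (-(a * n * Δ ^ 2))) :=
        add_le_add (hX₁ Δ hΔpos) (hX₂ Δ hΔpos)
    _ = ENNReal.ofReal (4 * Real.exp (-(a * n * Δ ^ 2))) := by
        rw [← ENNReal.ofReal_add (by positivity) (by positivity)]; ring_nf
    _ = ENNReal.ofReal (4 * Real.exp (-((n : ℝ) / 4 * (a * (m₂ - m₁) ^ 2)))) := by
        congr 2
        rw [hΔ]; ring
end

section
/- Let a₁, a₂ > 0, n ≥ 1 and τ ∈ ℝ. Let X̂₁, X̂₂ be real random variables that are (a₁, n)-concentrated around m₁ and m₂ respectively with m₁ < m₂, and let Ŷ₃ be a real random variable that is (a₂, n)-concentrated around m₃ with m₃ > τ. Then P( √a₁·(X̂₁ − X̂₂) ≥ √a₂·(Ŷ₃ − τ) ) ≤ 6·exp( −(n/9)·( √a₂(m₃ − τ) + √a₁(m₂ − m₁) )² ). -/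
open MeasureTheory Real

/-- Three-armed crossing bound: if `X₁`, `X₂` are `(a₁, n)`-concentrated around `m₁ < m₂`
and `Y₃` is `(a₂, n)`-concentrated around `m₃ > τ`, then
`P(√a₁(X̂₁ − X̂₂) ≥ √a₂(Ŷ₃ − τ)) ≤ 6·exp(−(n/9)(√a₂(m₃ − τ) + √a₁(m₂ − m₁))²)`. -/
theorem prob_gap_crossing_le {Ω : Type*} [MeasurableSpace Ω] (P : Measure Ω)
    [IsProbabilityMeasure P] (a₁ a₂ : ℝ) (n : ℕ) (ha₁ : 0 < a₁) (ha₂ : 0 < a₂) (hn : 1 ≤ n)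
    (τ m₁ m₂ m₃ : ℝ) (hm : m₁ < m₂) (hm₃ : τ < m₃) (X₁ X₂ Y₃ : Ω → ℝ)
    (hX₁ : ConcentratedAround P a₁ n X₁ m₁) (hX₂ : ConcentratedAround P a₁ n X₂ m₂)
    (hY₃ : ConcentratedAround P a₂ n Y₃ m₃) :
    P {ω | Real.sqrt a₂ * (Y₃ ω - τ) ≤ Real.sqrt a₁ * (X₁ ω - X₂ ω)}
      ≤ ENNReal.ofReal (6 * Real.exp (-((n : ℝ) / 9 *
          (Real.sqrt a₂ * (m₃ - τ) + Real.sqrt a₁ * (m₂ - m₁)) ^ 2))) := by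
  set G : ℝ := Real.sqrt a₂ * (m₃ - τ) + Real.sqrt a₁ * (m₂ - m₁) with hGdef
  have hs₁ : 0 < Real.sqrt a₁ := Real.sqrt_pos.mpr ha₁
  have hs₂ : 0 < Real.sqrt a₂ := Real.sqrt_pos.mpr ha₂
  have hsq₁ : Real.sqrt a₁ ^ 2 = a₁ := Real.sq_sqrt ha₁.le
  have hsq₂ : Real.sqrt a₂ ^ 2 = a₂ := Real.sq_sqrt ha₂.le
  have hG : 0 < G := by
    have := mul_pos hs₂ (sub_pos.mpr hm₃)
    have := mul_pos hs₁ (sub_pos.mpr hm)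
    positivity
  set Δ₁ : ℝ := G / (3 * Real.sqrt a₁) with hΔ₁def
  set Δ₃ : ℝ := G / (3 * Real.sqrt a₂) with hΔ₃def
  have hΔ₁ : 0 < Δ₁ := by positivity
  have hΔ₃ : 0 < Δ₃ := by positivity
  have hsub : {ω | Real.sqrt a₂ * (Y₃ ω - τ) ≤ Real.sqrt a₁ * (X₁ ω - X₂ ω)}
      ⊆ {ω | Δ₁ ≤ |X₁ ω - m₁|} ∪ ({ω | Δ₁ ≤ |X₂ ω - m₂|} ∪ {ω | Δ₃ ≤ |Y₃ ω - m₃|}) := by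
    intro ω hω
    simp only [Set.mem_setOf_eq] at hω
    by_contra hc
    simp only [Set.mem_union, Set.mem_setOf_eq, not_or, not_le] at hc
    obtain ⟨h1, h2, h3⟩ := hc
    have e1 : Real.sqrt a₁ * (X₁ ω - m₁) < Real.sqrt a₁ * Δ₁ := by
      have := (abs_lt.mp h1).2
      nlinarith
    have e2 : -(Real.sqrt a₁ * Δ₁) < Real.sqrt a₁ * (X₂ ω - m₂) := by
      have := (abs_lt.mp h2).1
      nlinarith
    have e3 : -(Real.sqrt a₂ * Δ₃) < Real.sqrt a₂ * (Y₃ ω - m₃) := by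
      have := (abs_lt.mp h3).1
      nlinarith
    have hv₁ : Real.sqrt a₁ * Δ₁ = G / 3 := by
      rw [hΔ₁def]; field_simp
    have hv₃ : Real.sqrt a₂ * Δ₃ = G / 3 := by
      rw [hΔ₃def]; field_simp
    rw [hv₁] at e1 e2
    rw [hv₃] at e3
    -- hω : √a₂(Y₃ - τ) ≤ √a₁(X₁ - X₂)
    -- √a₂(Y₃ - τ) = √a₂(m₃-τ) + √a₂(Y₃-m₃) > G - √a₁(m₂-m₁) - G/3
    -- √a₁(X₁ - X₂) = √a₁(X₁-m₁) - √a₁(X₂-m₂) - √a₁(m₂-m₁) < 2G/3 - √a₁(m₂-m₁)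
    have key1 : Real.sqrt a₂ * (Y₃ ω - τ)
        = Real.sqrt a₂ * (m₃ - τ) + Real.sqrt a₂ * (Y₃ ω - m₃) := by ring
    have key2 : Real.sqrt a₁ * (X₁ ω - X₂ ω)
        = Real.sqrt a₁ * (X₁ ω - m₁) - Real.sqrt a₁ * (X₂ ω - m₂)
          - Real.sqrt a₁ * (m₂ - m₁) := by ring
    have hGeq : Real.sqrt a₂ * (m₃ - τ) = G - Real.sqrt a₁ * (m₂ - m₁) := by
      rw [hGdef]; ring
    nlinarith
  have hexp₁ : a₁ * (n : ℝ) * Δ₁ ^ 2 = (n : ℝ) / 9 * G ^ 2 := by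
    rw [hΔ₁def]
    field_simp
    rw [hsq₁]; ring
  have hexp₃ : a₂ * (n : ℝ) * Δ₃ ^ 2 = (n : ℝ) / 9 * G ^ 2 := by
    rw [hΔ₃def]
    field_simp
    rw [hsq₂]; ring
  calc P {ω | Real.sqrt a₂ * (Y₃ ω - τ) ≤ Real.sqrt a₁ * (X₁ ω - X₂ ω)}
      ≤ P ({ω | Δ₁ ≤ |X₁ ω - m₁|} ∪ ({ω | Δ₁ ≤ |X₂ ω - m₂|} ∪ {ω | Δ₃ ≤ |Y₃ ω - m₃|})) :=
        measure_mono hsub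
    _ ≤ P {ω | Δ₁ ≤ |X₁ ω - m₁|} + P ({ω | Δ₁ ≤ |X₂ ω - m₂|} ∪ {ω | Δ₃ ≤ |Y₃ ω - m₃|}) :=
        measure_union_le _ _
    _ ≤ P {ω | Δ₁ ≤ |X₁ ω - m₁|} + (P {ω | Δ₁ ≤ |X₂ ω - m₂|} + P {ω | Δ₃ ≤ |Y₃ ω - m₃|}) := by
        gcongr
        exact measure_union_le _ _
    _ ≤ ENNReal.ofReal (2 * Real.exp (-(a₁ * n * Δ₁ ^ 2)))
        + (ENNReal.ofReal (2 * Real.exp (-(a₁ * n * Δ₁ ^ 2)))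
          + ENNReal.ofReal (2 * Real.exp (-(a₂ * n * Δ₃ ^ 2)))) := by
        gcongr
        · exact hX₁ Δ₁ hΔ₁
        · exact hX₂ Δ₁ hΔ₁
        · exact hY₃ Δ₃ hΔ₃
    _ = ENNReal.ofReal (6 * Real.exp (-((n : ℝ) / 9 * G ^ 2))) := by
        rw [hexp₁, hexp₃, ← ENNReal.ofReal_add (by positivity) (by positivity),
          ← ENNReal.ofReal_add (by positivity) (by positivity)]
        ring_nf
end

section
/- Let a₁, a₂ > 0, n ≥ 1 and τ ∈ ℝ. Let X̂₁, X̂₂ be real random variables that are (a₁, n)-concentrated around m₁₁ and m₁₂ respectively with m₁₁ < m₁₂, and let Ŷ₁, Ŷ₂ be real random variables that are (a₂, n)-concentrated around m₂₁ and m₂₂ respectively with m₂₁ < τ and m₂₂ ≤ τ. Then P( {Ŷ₁ > τ} ∪ ( {Ŷ₂ ≤ τ} ∩ {X̂₁ > X̂₂} ) ) ≤ 6·exp( −(n/4)·min{ a₂(τ − m₂₁)², a₁(m₁₂ − m₁₁)² } ). -/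
open MeasureTheory Real

/-- Two-armed error bound for a feasible instance whose second arm is feasible suboptimal:
if the objective estimates `X₁, X₂` are `(a₁, n)`-concentrated around `m₁₁ < m₁₂` and the
constraint estimates `Y₁, Y₂` are `(a₂, n)`-concentrated around `m₂₁ < τ` and `m₂₂ ≤ τ`, then
`P({Ŷ₁ > τ} ∪ ({Ŷ₂ ≤ τ} ∩ {X̂₁ > X̂₂})) ≤ 6·exp(−(n/4)·min{a₂(τ − m₂₁)², a₁(m₁₂ − m₁₁)²})`. -/
theorem two_arm_error_feasible_suboptimal {Ω : Type*} [MeasurableSpace Ω] (P : Measure Ω)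
    [IsProbabilityMeasure P] (a₁ a₂ : ℝ) (n : ℕ) (ha₁ : 0 < a₁) (ha₂ : 0 < a₂) (hn : 1 ≤ n)
    (τ m₁₁ m₁₂ m₂₁ m₂₂ : ℝ) (hm₁ : m₁₁ < m₁₂) (hm₂₁ : m₂₁ < τ) (hm₂₂ : m₂₂ ≤ τ)
    (X₁ X₂ Y₁ Y₂ : Ω → ℝ)
    (hX₁ : ConcentratedAround P a₁ n X₁ m₁₁) (hX₂ : ConcentratedAround P a₁ n X₂ m₁₂)
    (hY₁ : ConcentratedAround P a₂ n Y₁ m₂₁) (hY₂ : ConcentratedAround P a₂ n Y₂ m₂₂) :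
    P ({ω | τ < Y₁ ω} ∪ ({ω | Y₂ ω ≤ τ} ∩ {ω | X₂ ω < X₁ ω}))
      ≤ ENNReal.ofReal (6 * Real.exp (-((n : ℝ) / 4 *
          min (a₂ * (τ - m₂₁) ^ 2) (a₁ * (m₁₂ - m₁₁) ^ 2)))) := by
  have hΔ₁ : (τ - m₂₁) = (τ - m₂₁) := rfl
  set Δ₁ : ℝ := τ - m₂₁
  set Δ : ℝ := (m₁₂ - m₁₁) / 2
  have hΔ₁pos : 0 < Δ₁ := by show (0:ℝ) < τ - m₂₁; linarith
  have hΔpos : 0 < Δ := by show (0:ℝ) < (m₁₂ - m₁₁)/2; linarith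
  have hsub : {ω | τ < Y₁ ω} ∪ ({ω | Y₂ ω ≤ τ} ∩ {ω | X₂ ω < X₁ ω}) ⊆
      ({ω | Δ₁ ≤ |Y₁ ω - m₂₁|} ∪ {ω | Δ ≤ |X₁ ω - m₁₁|}) ∪ {ω | Δ ≤ |X₂ ω - m₁₂|} := by
    intro ω hω
    rcases hω with h | ⟨_, h⟩
    · left; left
      simp only [Set.mem_setOf_eq] at *
      have : Δ₁ ≤ Y₁ ω - m₂₁ := by show τ - m₂₁ ≤ _; linarith
      exact this.trans (le_abs_self _)
    · simp only [Set.mem_setOf_eq] at h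
      by_cases h1 : Δ ≤ |X₁ ω - m₁₁|
      · left; right; exact h1
      · right
        simp only [Set.mem_setOf_eq]
        push_neg at h1
        rw [abs_lt] at h1
        have : X₂ ω - m₁₂ ≤ -Δ := by
          have hx1 : X₁ ω < m₁₁ + Δ := by linarith [h1.2]
          have : X₂ ω < m₁₁ + Δ := by linarith
          show X₂ ω - m₁₂ ≤ -((m₁₂ - m₁₁)/2); have h5 : X₂ ω < m₁₁ + (m₁₂ - m₁₁)/2 := this; linarith
        calc Δ ≤ -(X₂ ω - m₁₂) := by linarith
        _ ≤ |X₂ ω - m₁₂| := neg_le_abs _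
  have hmeas : P ({ω | τ < Y₁ ω} ∪ ({ω | Y₂ ω ≤ τ} ∩ {ω | X₂ ω < X₁ ω})) ≤
      P {ω | Δ₁ ≤ |Y₁ ω - m₂₁|} + P {ω | Δ ≤ |X₁ ω - m₁₁|} + P {ω | Δ ≤ |X₂ ω - m₁₂|} := by
    refine (measure_mono hsub).trans ?_
    refine (measure_union_le _ _).trans ?_
    exact add_le_add (measure_union_le _ _) le_rfl
  have h1 := hY₁ Δ₁ hΔ₁pos
  have h2 := hX₁ Δ hΔpos
  have h3 := hX₂ Δ hΔpos
  set M : ℝ := (n : ℝ) / 4 * min (a₂ * (τ - m₂₁) ^ 2) (a₁ * (m₁₂ - m₁₁) ^ 2)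
  have hnpos : (0 : ℝ) < n := by positivity
  have hE1 : M ≤ a₂ * n * Δ₁ ^ 2 := by
    have := min_le_left (a₂ * (τ - m₂₁) ^ 2) (a₁ * (m₁₂ - m₁₁) ^ 2)
    have h4 : (n : ℝ) / 4 * (a₂ * (τ - m₂₁) ^ 2) ≤ a₂ * n * Δ₁ ^ 2 := by
      have : (0 : ℝ) ≤ a₂ * (τ - m₂₁) ^ 2 := by positivity
      show (n:ℝ)/4 * (a₂ * (τ - m₂₁)^2) ≤ a₂ * n * (τ - m₂₁)^2; nlinarith
    calc M ≤ (n : ℝ) / 4 * (a₂ * (τ - m₂₁) ^ 2) := by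
            apply mul_le_mul_of_nonneg_left this; positivity
      _ ≤ _ := h4
  have hE2 : M ≤ a₁ * n * Δ ^ 2 := by
    have := min_le_right (a₂ * (τ - m₂₁) ^ 2) (a₁ * (m₁₂ - m₁₁) ^ 2)
    have h4 : (n : ℝ) / 4 * (a₁ * (m₁₂ - m₁₁) ^ 2) = a₁ * n * Δ ^ 2 := by
      show (n:ℝ)/4 * (a₁ * (m₁₂ - m₁₁)^2) = a₁ * n * ((m₁₂ - m₁₁)/2)^2; ring
    calc M ≤ (n : ℝ) / 4 * (a₁ * (m₁₂ - m₁₁) ^ 2) := by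
            apply mul_le_mul_of_nonneg_left this; positivity
      _ = _ := h4
  have key : ∀ E : ℝ, M ≤ E →
      (2 : ℝ) * Real.exp (-E) ≤ 2 * Real.exp (-M) := fun E hE => by
    have := Real.exp_le_exp.mpr (neg_le_neg hE)
    linarith
  refine hmeas.trans ?_
  calc P {ω | Δ₁ ≤ |Y₁ ω - m₂₁|} + P {ω | Δ ≤ |X₁ ω - m₁₁|} + P {ω | Δ ≤ |X₂ ω - m₁₂|}
      ≤ ENNReal.ofReal (2 * Real.exp (-M)) + ENNReal.ofReal (2 * Real.exp (-M))
        + ENNReal.ofReal (2 * Real.exp (-M)) := by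
        gcongr
        · exact h1.trans (ENNReal.ofReal_le_ofReal (key _ hE1))
        · exact h2.trans (ENNReal.ofReal_le_ofReal (key _ hE2))
        · exact h3.trans (ENNReal.ofReal_le_ofReal (key _ hE2))
    _ = ENNReal.ofReal (6 * Real.exp (-M)) := by
        rw [← ENNReal.ofReal_add (by positivity) (by positivity),
          ← ENNReal.ofReal_add (by positivity) (by positivity)]
        ring_nf
end

section
/- Let a₂ > 0, n ≥ 1 and τ ∈ ℝ. Let Ŷ₁ and Ŷ₂ be real random variables that are (a₂, n)-concentrated around m₁ and m₂ respectively, with τ < m₁ < m₂. Then P( {Ŷ₁ ≤ τ} ∪ {Ŷ₂ ≤ Ŷ₁} ) ≤ 6·exp( −(n/4)·min{ a₂(m₁ − τ)², a₂(m₂ − m₁)² } ). -/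
open MeasureTheory Real

/-- Two-armed error bound for an infeasible instance: if the constraint estimates `Y₁, Y₂`
are `(a₂, n)`-concentrated around `m₁` and `m₂` with `τ < m₁ < m₂`, then
`P({Ŷ₁ ≤ τ} ∪ {Ŷ₂ ≤ Ŷ₁}) ≤ 6·exp(−(n/4)·min{a₂(m₁ − τ)², a₂(m₂ − m₁)²})`. -/
theorem two_arm_error_infeasible {Ω : Type*} [MeasurableSpace Ω] (P : Measure Ω)
    [IsProbabilityMeasure P] (a₂ : ℝ) (n : ℕ) (ha₂ : 0 < a₂) (hn : 1 ≤ n)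
    (τ m₁ m₂ : ℝ) (hm₁ : τ < m₁) (hm₂ : m₁ < m₂) (Y₁ Y₂ : Ω → ℝ)
    (hY₁ : ConcentratedAround P a₂ n Y₁ m₁) (hY₂ : ConcentratedAround P a₂ n Y₂ m₂) :
    P ({ω | Y₁ ω ≤ τ} ∪ {ω | Y₂ ω ≤ Y₁ ω})
      ≤ ENNReal.ofReal (6 * Real.exp (-((n : ℝ) / 4 *
          min (a₂ * (m₁ - τ) ^ 2) (a₂ * (m₂ - m₁) ^ 2)))) := by
  set Δ₁ : ℝ := m₁ - τ with hΔ₁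
  set Δ₂ : ℝ := (m₂ - m₁) / 2 with hΔ₂
  have hΔ₁pos : 0 < Δ₁ := by simp [hΔ₁]; linarith
  have hΔ₂pos : 0 < Δ₂ := by simp [hΔ₂]; linarith
  have hnpos : (0 : ℝ) < n := by exact_mod_cast Nat.lt_of_lt_of_le Nat.zero_lt_one hn
  set M : ℝ := (n : ℝ) / 4 * min (a₂ * (m₁ - τ) ^ 2) (a₂ * (m₂ - m₁) ^ 2) with hM
  -- exponent comparisons
  have e1 : M ≤ a₂ * n * Δ₁ ^ 2 := by
    have hmin : min (a₂ * (m₁ - τ) ^ 2) (a₂ * (m₂ - m₁) ^ 2) ≤ a₂ * (m₁ - τ) ^ 2 :=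
      min_le_left _ _
    have h1 : M ≤ (n : ℝ) / 4 * (a₂ * (m₁ - τ) ^ 2) := by
      rw [hM]; exact mul_le_mul_of_nonneg_left hmin (by positivity)
    have h2 : (n : ℝ) / 4 * (a₂ * (m₁ - τ) ^ 2) ≤ a₂ * n * Δ₁ ^ 2 := by
      rw [hΔ₁]; nlinarith [mul_nonneg ha₂.le (sq_nonneg (m₁ - τ))]
    exact le_trans h1 h2
  have e2 : M ≤ a₂ * n * Δ₂ ^ 2 := by
    have h : a₂ * n * Δ₂ ^ 2 = (n : ℝ) / 4 * (a₂ * (m₂ - m₁) ^ 2) := by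
      simp [hΔ₂]; ring
    rw [h, hM]
    exact mul_le_mul_of_nonneg_left (min_le_right _ _) (by positivity)
  have key : ∀ c : ℝ, M ≤ c → Real.exp (-c) ≤ Real.exp (-M) := fun c hc =>
    Real.exp_le_exp.2 (by linarith)
  -- event inclusions
  have s1 : {ω | Y₁ ω ≤ τ} ⊆ {ω | Δ₁ ≤ |Y₁ ω - m₁|} := by
    intro ω hω
    simp only [Set.mem_setOf_eq] at hω ⊢
    rw [abs_sub_comm]
    calc Δ₁ = m₁ - τ := rfl
      _ ≤ m₁ - Y₁ ω := by linarith
      _ ≤ |m₁ - Y₁ ω| := le_abs_self _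
  have s2 : {ω | Y₂ ω ≤ Y₁ ω} ⊆ {ω | Δ₂ ≤ |Y₁ ω - m₁|} ∪ {ω | Δ₂ ≤ |Y₂ ω - m₂|} := by
    intro ω hω
    simp only [Set.mem_setOf_eq, Set.mem_union] at hω ⊢
    by_contra h
    push_neg at h
    obtain ⟨h1, h2⟩ := h
    rw [abs_lt] at h1 h2
    have : Y₁ ω < m₁ + Δ₂ := by linarith [h1.2]
    have : m₂ - Δ₂ < Y₂ ω := by linarith [h2.1]
    have : m₁ + Δ₂ = m₂ - Δ₂ := by rw [hΔ₂]; ring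
    linarith
  have p1 : P {ω | Y₁ ω ≤ τ} ≤ ENNReal.ofReal (2 * Real.exp (-M)) := by
    refine (measure_mono s1).trans ((hY₁ Δ₁ hΔ₁pos).trans ?_)
    exact ENNReal.ofReal_le_ofReal (by
      have := key _ e1; nlinarith [Real.exp_pos (-(a₂ * n * Δ₁ ^ 2))])
  have p2 : P {ω | Y₂ ω ≤ Y₁ ω} ≤ ENNReal.ofReal (4 * Real.exp (-M)) := by
    refine (measure_mono s2).trans ((measure_union_le _ _).trans ?_)
    have b1 := (hY₁ Δ₂ hΔ₂pos)
    have b2 := (hY₂ Δ₂ hΔ₂pos)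
    calc P {ω | Δ₂ ≤ |Y₁ ω - m₁|} + P {ω | Δ₂ ≤ |Y₂ ω - m₂|}
        ≤ ENNReal.ofReal (2 * Real.exp (-(a₂ * n * Δ₂ ^ 2)))
          + ENNReal.ofReal (2 * Real.exp (-(a₂ * n * Δ₂ ^ 2))) := add_le_add b1 b2
      _ = ENNReal.ofReal (4 * Real.exp (-(a₂ * n * Δ₂ ^ 2))) := by
          rw [← ENNReal.ofReal_add (by positivity) (by positivity)]; ring_nf
      _ ≤ ENNReal.ofReal (4 * Real.exp (-M)) :=
          ENNReal.ofReal_le_ofReal (by nlinarith [key _ e2])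
  calc P ({ω | Y₁ ω ≤ τ} ∪ {ω | Y₂ ω ≤ Y₁ ω})
      ≤ P {ω | Y₁ ω ≤ τ} + P {ω | Y₂ ω ≤ Y₁ ω} := measure_union_le _ _
    _ ≤ ENNReal.ofReal (2 * Real.exp (-M)) + ENNReal.ofReal (4 * Real.exp (-M)) :=
        add_le_add p1 p2
    _ = ENNReal.ofReal (6 * Real.exp (-M)) := by
        rw [← ENNReal.ofReal_add (by positivity) (by positivity)]; ring_nf
end
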